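/- For every integer n ≥ 2, the domination polynomial of the generalized friendship graph F_{4,n} satisfies the recurrence D(F_{4,n},x) = ((1+x)^3 + x)·D(F_{4,n-1},x) − (1+3x)·(x+3x^2+x^3)^{n−1} + (1+x)^3·x^{n−1} − (x^2+x)·(x^3+3x^2+3x)^{n−1}, where D(F_{4,1},x) = x^4+4x^3+6x^2. -/

import Mathlib

open Polynomial Finset

/-- `S` is a dominating set of the graph `G`: every vertex not in `S` has a neighbor in `S`. -/
def SimpleGraph.IsDomSet {V : Type*} (G : SimpleGraph V) (S : Finset V) : Prop :=
  ∀ v : V, v ∈ S ∨ ∃ u ∈ S, G.Adj u v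

open Classical in
/-- The domination polynomial of a finite graph `G`:
`D(G,x) = ∑ d(G,i) xⁱ` where `d(G,i)` is the number of dominating sets of size `i`. -/
noncomputable def domPoly {V : Type*} [Fintype V] (G : SimpleGraph V) : Polynomial ℂ :=
  ∑ S ∈ Finset.univ.filter (fun S : Finset V => G.IsDomSet S), X ^ S.card

/-- The generalized friendship (flower) graph `F_{4,n}`: `n` cycles of length `4`
meeting at a single common vertex (the vertex `none`).  The `i`-th cycle is
`none — (i,0) — (i,1) — (i,2) — none`. -/
def flower4 (n : ℕ) : SimpleGraph (Option (Fin n × Fin 3)) :=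
  SimpleGraph.fromRel (fun a b =>
    (a = none ∧ ∃ i, b = some (i, 0)) ∨
    (a = none ∧ ∃ i, b = some (i, 2)) ∨
    (∃ i, a = some (i, 0) ∧ b = some (i, 1)) ∨
    (∃ i, a = some (i, 1) ∧ b = some (i, 2)))

namespace F4aux

def memB {n : ℕ} (p : Bool × (Fin n → Finset (Fin 3))) : Option (Fin n × Fin 3) → Bool
  | none => p.1
  | some (i, j) => decide (j ∈ p.2 i)

def toSet (n : ℕ) (p : Bool × (Fin n → Finset (Fin 3))) : Finset (Option (Fin n × Fin 3)) :=
  Finset.univ.filter (fun v => memB p v = true)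

@[simp] lemma mem_toSet_none {n : ℕ} {p : Bool × (Fin n → Finset (Fin 3))} :
    (none ∈ toSet n p) ↔ p.1 = true := by rw [toSet, Finset.mem_filter]; simp [memB]

@[simp] lemma mem_toSet_some {n : ℕ} {p : Bool × (Fin n → Finset (Fin 3))} {i : Fin n} {j : Fin 3} :
    (some (i, j) ∈ toSet n p) ↔ j ∈ p.2 i := by rw [toSet, Finset.mem_filter]; simp [memB]

lemma toSet_bijective (n : ℕ) : Function.Bijective (toSet n) := by
  constructor
  · rintro ⟨b, g⟩ ⟨b', g'⟩ h
    rw [Finset.ext_iff] at h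
    have hb : b = b' := by have := h none; simpa using this
    have hg : g = g' := by
      funext i; ext j
      have := h (some (i, j)); simpa using this
    simp [hb, hg]
  · intro S
    classical
    refine ⟨(decide (none ∈ S), fun i => Finset.univ.filter (fun j => some (i, j) ∈ S)), ?_⟩
    ext v
    match v with
    | none => simp
    | some (i, j) => simp

lemma card_toSet (n : ℕ) (p : Bool × (Fin n → Finset (Fin 3))) :
    (toSet n p).card = (cond p.1 1 0) + ∑ i, (p.2 i).card := by
  classical
  rw [toSet, Finset.card_filter]
  rw [Fintype.sum_option]
  congr 1
  · cases hb : p.1 <;> simp [memB, hb]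
  · rw [Fintype.sum_prod_type]
    refine Finset.sum_congr rfl fun i _ => ?_
    simp only [memB, decide_eq_true_eq]
    rw [Finset.sum_ite_mem, Finset.univ_inter, Finset.sum_const, smul_eq_mul, mul_one]

lemma adj_iff {n : ℕ} (u v : Option (Fin n × Fin 3)) : (flower4 n).Adj u v ↔
    (∃ i, (u = none ∧ v = some (i,0)) ∨ (u = some (i,0) ∧ v = none) ∨
        (u = none ∧ v = some (i,2)) ∨ (u = some (i,2) ∧ v = none) ∨
        (u = some (i,0) ∧ v = some (i,1)) ∨ (u = some (i,1) ∧ v = some (i,0)) ∨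
        (u = some (i,1) ∧ v = some (i,2)) ∨ (u = some (i,2) ∧ v = some (i,1))) := by
  simp only [flower4, SimpleGraph.fromRel_adj]
  constructor
  · rintro ⟨hne, h | h⟩ <;> aesop
  · rintro ⟨i, h⟩
    rcases h with ⟨rfl,rfl⟩|⟨rfl,rfl⟩|⟨rfl,rfl⟩|⟨rfl,rfl⟩|⟨rfl,rfl⟩|⟨rfl,rfl⟩|⟨rfl,rfl⟩|⟨rfl,rfl⟩ <;>
      refine ⟨by simp, ?_⟩ <;> aesop

def NEp (t : Finset (Fin 3)) : Prop := (0:Fin 3) ∈ t ∨ (1:Fin 3) ∈ t ∨ (2:Fin 3) ∈ t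
def Pp (t : Finset (Fin 3)) : Prop :=
  ((0:Fin 3) ∈ t ∨ (1:Fin 3) ∈ t) ∧ ((2:Fin 3) ∈ t ∨ (1:Fin 3) ∈ t) ∧ NEp t
def Qp (t : Finset (Fin 3)) : Prop := (0:Fin 3) ∈ t ∨ (2:Fin 3) ∈ t

instance : DecidablePred NEp := fun t => by unfold NEp; infer_instance
instance : DecidablePred Pp := fun t => by unfold Pp; infer_instance
instance : DecidablePred Qp := fun t => by unfold Qp; infer_instance

set_option maxHeartbeats 1600000 in
lemma dominated_iff {n : ℕ} (p : Bool × (Fin n → Finset (Fin 3))) (v : Option (Fin n × Fin 3)) :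
    (v ∈ toSet n p ∨ ∃ u ∈ toSet n p, (flower4 n).Adj u v) ↔
      (match v with
       | none => p.1 = true ∨ ∃ i, Qp (p.2 i)
       | some (i, j) =>
          (j = 0 → ((0:Fin 3) ∈ p.2 i ∨ p.1 = true ∨ (1:Fin 3) ∈ p.2 i)) ∧
          (j = 1 → NEp (p.2 i)) ∧
          (j = 2 → ((2:Fin 3) ∈ p.2 i ∨ p.1 = true ∨ (1:Fin 3) ∈ p.2 i))) := by
  match v with
  | none =>
    simp only [mem_toSet_none, adj_iff, Qp]
    constructor
    · rintro (h | ⟨u, hu, i, hadj⟩)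
      · exact Or.inl h
      · rcases hadj with ⟨_,h⟩|⟨rfl,_⟩|⟨_,h⟩|⟨rfl,_⟩|⟨_,h⟩|⟨_,h⟩|⟨_,h⟩|⟨rfl,h⟩ <;>
          first
          | exact Or.inr ⟨i, Or.inl (mem_toSet_some.mp hu)⟩
          | exact Or.inr ⟨i, Or.inr (mem_toSet_some.mp hu)⟩
          | simp at h
    · rintro (h | ⟨i, h | h⟩)
      · exact Or.inl h
      · exact Or.inr ⟨some (i,0), mem_toSet_some.mpr h, i, by tauto⟩
      · exact Or.inr ⟨some (i,2), mem_toSet_some.mpr h, i, by tauto⟩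
  | some (i, j) =>
    fin_cases j
    · simp only [mem_toSet_some, adj_iff]
      constructor
      · rintro (h | ⟨u, hu, i', hadj⟩)
        · refine ⟨fun _ => Or.inl h, by simp, by simp⟩
        · rcases hadj with ⟨rfl,h⟩|⟨_,h⟩|⟨rfl,h⟩|⟨_,h⟩|⟨rfl,h⟩|⟨rfl,h⟩|⟨rfl,h⟩|⟨rfl,h⟩ <;>
            simp_all <;> tauto
      · rintro ⟨h, -, -⟩
        rcases h rfl with h | h | h
        · exact Or.inl h
        · exact Or.inr ⟨none, mem_toSet_none.mpr h, i, by tauto⟩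
        · exact Or.inr ⟨some (i,1), mem_toSet_some.mpr h, i, by tauto⟩
    · simp only [mem_toSet_some, adj_iff, NEp]
      constructor
      · rintro (h | ⟨u, hu, i', hadj⟩)
        · refine ⟨by simp, fun _ => Or.inr (Or.inl h), by simp⟩
        · rcases hadj with ⟨rfl,h⟩|⟨_,h⟩|⟨rfl,h⟩|⟨_,h⟩|⟨rfl,h⟩|⟨rfl,h⟩|⟨rfl,h⟩|⟨rfl,h⟩ <;>
            simp_all <;> tauto
      · rintro ⟨-, h, -⟩
        rcases h rfl with h | h | h
        · exact Or.inr ⟨some (i,0), mem_toSet_some.mpr h, i, by tauto⟩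
        · exact Or.inl h
        · exact Or.inr ⟨some (i,2), mem_toSet_some.mpr h, i, by tauto⟩
    · simp only [mem_toSet_some, adj_iff]
      constructor
      · rintro (h | ⟨u, hu, i', hadj⟩)
        · refine ⟨by simp, by simp, fun _ => Or.inl h⟩
        · rcases hadj with ⟨rfl,h⟩|⟨_,h⟩|⟨rfl,h⟩|⟨_,h⟩|⟨rfl,h⟩|⟨rfl,h⟩|⟨rfl,h⟩|⟨rfl,h⟩ <;>
            simp_all <;> tauto
      · rintro ⟨-, -, h⟩
        rcases h rfl with h | h | h
        · exact Or.inl h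
        · exact Or.inr ⟨none, mem_toSet_none.mpr h, i, by tauto⟩
        · exact Or.inr ⟨some (i,1), mem_toSet_some.mpr h, i, by tauto⟩

lemma forall_fin3 {A B C : Prop} :
    (∀ j : Fin 3, ((j = 0 → A) ∧ (j = 1 → B) ∧ (j = 2 → C))) ↔ A ∧ B ∧ C := by
  constructor
  · intro h; exact ⟨(h 0).1 rfl, (h 1).2.1 rfl, (h 2).2.2 rfl⟩
  · rintro ⟨a, b, c⟩ j
    fin_cases j
    · exact ⟨fun _ => a, fun h => absurd h (by decide), fun h => absurd h (by decide)⟩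
    · exact ⟨fun h => absurd h (by decide), fun _ => b, fun h => absurd h (by decide)⟩
    · exact ⟨fun h => absurd h (by decide), fun h => absurd h (by decide), fun _ => c⟩

lemma isDom_true_iff {n : ℕ} (g : Fin n → Finset (Fin 3)) :
    (flower4 n).IsDomSet (toSet n (true, g)) ↔ ∀ i, NEp (g i) := by
  unfold SimpleGraph.IsDomSet
  rw [Option.forall]
  simp only [dominated_iff, Prod.forall]
  constructor
  · intro ⟨_, h⟩ i
    exact (h i 1).2.1 rfl
  · intro h
    exact ⟨Or.inl trivial, fun i => (forall_fin3.mpr ⟨Or.inr (Or.inl trivial), h i, Or.inr (Or.inl trivial)⟩)⟩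

lemma isDom_false_iff {n : ℕ} (g : Fin n → Finset (Fin 3)) :
    (flower4 n).IsDomSet (toSet n (false, g)) ↔ (∀ i, Pp (g i)) ∧ ∃ i, Qp (g i) := by
  unfold SimpleGraph.IsDomSet
  rw [Option.forall]
  simp only [dominated_iff, Prod.forall]
  constructor
  · intro ⟨h0, h⟩
    refine ⟨fun i => ?_, ?_⟩
    · have h1 := (h i 0).1 rfl
      have h2 := (h i 1).2.1 rfl
      have h3 := (h i 2).2.2 rfl
      unfold Pp
      simp only [Bool.false_eq_true, false_or] at h1 h3 ⊢
      exact ⟨by tauto, by tauto, h2⟩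
    · rcases h0 with h0 | h0
      · exact absurd h0 (by simp)
      · exact h0
  · intro ⟨hP, hQ⟩
    refine ⟨Or.inr hQ, fun i => forall_fin3.mpr ?_⟩
    have := hP i
    unfold Pp at this
    exact ⟨by tauto, this.2.2, by tauto⟩

lemma sum_enum (F : Finset (Fin 3) → Polynomial ℂ) :
    ∑ t : Finset (Fin 3), F t =
      F ∅ + F {0} + F {1} + F {2} + F {0,1} + F {0,2} + F {1,2} + F {0,1,2} := by
  rw [show (Finset.univ : Finset (Finset (Fin 3))) =
      {∅, {0}, {1}, {2}, {0,1}, {0,2}, {1,2}, {0,1,2}} from by decide]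
  rw [Finset.sum_insert (by decide), Finset.sum_insert (by decide),
    Finset.sum_insert (by decide), Finset.sum_insert (by decide),
    Finset.sum_insert (by decide), Finset.sum_insert (by decide),
    Finset.sum_insert (by decide), Finset.sum_singleton]
  ring

lemma sum_NE : ∑ t : Finset (Fin 3), (if NEp t then (X : Polynomial ℂ) ^ t.card else 0)
    = 3*X + 3*X^2 + X^3 := by
  rw [sum_enum]
  rw [if_neg (by decide), if_pos (by decide), if_pos (by decide), if_pos (by decide),
    if_pos (by decide), if_pos (by decide), if_pos (by decide), if_pos (by decide)]
  rw [show ({0} : Finset (Fin 3)).card = 1 from by decide,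
    show ({1} : Finset (Fin 3)).card = 1 from by decide,
    show ({2} : Finset (Fin 3)).card = 1 from by decide,
    show ({0,1} : Finset (Fin 3)).card = 2 from by decide,
    show ({0,2} : Finset (Fin 3)).card = 2 from by decide,
    show ({1,2} : Finset (Fin 3)).card = 2 from by decide,
    show ({0,1,2} : Finset (Fin 3)).card = 3 from by decide]
  ring

lemma sum_P : ∑ t : Finset (Fin 3), (if Pp t then (X : Polynomial ℂ) ^ t.card else 0)
    = X + 3*X^2 + X^3 := by
  rw [sum_enum]
  rw [if_neg (by decide), if_neg (by decide), if_pos (by decide), if_neg (by decide),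
    if_pos (by decide), if_pos (by decide), if_pos (by decide), if_pos (by decide)]
  rw [show ({1} : Finset (Fin 3)).card = 1 from by decide,
    show ({0,1} : Finset (Fin 3)).card = 2 from by decide,
    show ({0,2} : Finset (Fin 3)).card = 2 from by decide,
    show ({1,2} : Finset (Fin 3)).card = 2 from by decide,
    show ({0,1,2} : Finset (Fin 3)).card = 3 from by decide]
  ring

lemma sum_PQ : ∑ t : Finset (Fin 3), (if Pp t ∧ ¬ Qp t then (X : Polynomial ℂ) ^ t.card else 0)
    = X := by
  rw [sum_enum]
  rw [if_neg (by decide), if_neg (by decide), if_pos (by decide), if_neg (by decide),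
    if_neg (by decide), if_neg (by decide), if_neg (by decide), if_neg (by decide)]
  rw [show ({1} : Finset (Fin 3)).card = 1 from by decide]
  ring

lemma prod_indicator {ι : Type*} [Fintype ι] (p : ι → Prop) [DecidablePred p]
    (f : ι → Polynomial ℂ) :
    (∏ i, if p i then f i else 0) = if (∀ i, p i) then ∏ i, f i else 0 := by
  classical
  by_cases h : ∀ i, p i
  · rw [if_pos h]
    exact Finset.prod_congr rfl fun i _ => if_pos (h i)
  · rw [if_neg h]
    push_neg at h
    obtain ⟨i, hi⟩ := h
    exact Finset.prod_eq_zero (Finset.mem_univ i) (if_neg hi)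

lemma sum_prod_pi {n : ℕ} (F : Finset (Fin 3) → Polynomial ℂ) :
    ∑ g : Fin n → Finset (Fin 3), ∏ i, F (g i) = (∑ t : Finset (Fin 3), F t) ^ n := by
  rw [Finset.sum_pow' Finset.univ F n, Fintype.piFinset_univ]

lemma closedForm (n : ℕ) :
    domPoly (flower4 n) =
      X * (3*X + 3*X^2 + X^3)^n + ((X + 3*X^2 + X^3)^n - X^n) := by
  classical
  rw [domPoly, Finset.sum_filter]
  rw [← Fintype.sum_bijective (toSet n) (toSet_bijective n)
      (fun p => if (flower4 n).IsDomSet (toSet n p) then (X : Polynomial ℂ) ^ (toSet n p).card else 0)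
      _ (fun p => rfl)]
  rw [Fintype.sum_prod_type, Fintype.sum_bool]
  have htrue : (∑ g : Fin n → Finset (Fin 3),
      if (flower4 n).IsDomSet (toSet n (true, g)) then (X : Polynomial ℂ) ^ (toSet n (true, g)).card else 0)
      = X * (3*X + 3*X^2 + X^3)^n := by
    have key : ∀ g : Fin n → Finset (Fin 3),
        (if (flower4 n).IsDomSet (toSet n (true, g)) then (X : Polynomial ℂ) ^ (toSet n (true, g)).card else 0)
        = X * ∏ i, (if NEp (g i) then (X : Polynomial ℂ) ^ (g i).card else 0) := by
      intro g
      rw [prod_indicator, card_toSet]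
      by_cases h : ∀ i, NEp (g i)
      · rw [if_pos ((isDom_true_iff g).mpr h), if_pos h]
        simp only [cond_true, pow_add, pow_one, ← Finset.prod_pow_eq_pow_sum]
      · rw [if_neg (fun hd => h ((isDom_true_iff g).mp hd)), if_neg h, mul_zero]
    rw [Finset.sum_congr rfl (fun g _ => key g), ← Finset.mul_sum]
    congr 1
    rw [sum_prod_pi (fun t => if NEp t then (X : Polynomial ℂ) ^ t.card else 0), sum_NE]
  have hfalse : (∑ g : Fin n → Finset (Fin 3),
      if (flower4 n).IsDomSet (toSet n (false, g)) then (X : Polynomial ℂ) ^ (toSet n (false, g)).card else 0)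
      = (X + 3*X^2 + X^3)^n - X^n := by
    have key : ∀ g : Fin n → Finset (Fin 3),
        (if (flower4 n).IsDomSet (toSet n (false, g)) then (X : Polynomial ℂ) ^ (toSet n (false, g)).card else 0)
        = (∏ i, (if Pp (g i) then (X : Polynomial ℂ) ^ (g i).card else 0))
          - (∏ i, (if Pp (g i) ∧ ¬ Qp (g i) then (X : Polynomial ℂ) ^ (g i).card else 0)) := by
      intro g
      rw [prod_indicator, prod_indicator, card_toSet]
      simp only [cond_false, zero_add]
      by_cases hP : ∀ i, Pp (g i)
      · by_cases hQ : ∃ i, Qp (g i)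
        · rw [if_pos ((isDom_false_iff g).mpr ⟨hP, hQ⟩), if_pos hP]
          rw [if_neg (fun h => by obtain ⟨i, hi⟩ := hQ; exact (h i).2 hi)]
          rw [← Finset.prod_pow_eq_pow_sum, sub_zero]
        · push_neg at hQ
          rw [if_neg (fun hd => by
              obtain ⟨i, hi⟩ := ((isDom_false_iff g).mp hd).2; exact hQ i hi), if_pos hP,
            if_pos (fun i => ⟨hP i, hQ i⟩), sub_self]
      · rw [if_neg (fun hd => hP ((isDom_false_iff g).mp hd).1), if_neg hP,
          if_neg (fun h => hP (fun i => (h i).1)), sub_zero]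
    rw [Finset.sum_congr rfl (fun g _ => key g), Finset.sum_sub_distrib]
    rw [sum_prod_pi (fun t => if Pp t then (X : Polynomial ℂ) ^ t.card else 0),
      sum_prod_pi (fun t => if Pp t ∧ ¬ Qp t then (X : Polynomial ℂ) ^ t.card else 0),
      sum_P, sum_PQ]
  rw [htrue, hfalse]

end F4aux

/-- For every `n ≥ 2`,
`D(F_{4,n},x) = ((1+x)³+x)·D(F_{4,n-1},x) − (1+3x)(x+3x²+x³)^{n-1}
  + (1+x)³·x^{n-1} − (x²+x)(x³+3x²+3x)^{n-1}`,
where `D(F_{4,1},x) = x⁴+4x³+6x²`. -/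
theorem domPoly_flower4_recurrence :
    domPoly (flower4 1) = X ^ 4 + 4 * X ^ 3 + 6 * X ^ 2 ∧
    ∀ n : ℕ, 2 ≤ n →
      domPoly (flower4 n) =
        ((1 + X) ^ 3 + X) * domPoly (flower4 (n - 1))
          - (1 + 3 * X) * (X + 3 * X ^ 2 + X ^ 3) ^ (n - 1)
          + (1 + X) ^ 3 * X ^ (n - 1)
          - (X ^ 2 + X) * (X ^ 3 + 3 * X ^ 2 + 3 * X) ^ (n - 1) := by
  constructor
  · rw [F4aux.closedForm]; ring
  · intro n hn
    obtain ⟨m, rfl⟩ : ∃ m, n = m + 1 := ⟨n - 1, by omega⟩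
    rw [show m + 1 - 1 = m from rfl]
    rw [F4aux.closedForm, F4aux.closedForm]
    ring
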